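/- arXiv:1207.3425 — 2 statements merged into one kernel-verified Lean document; each statement's English description precedes it below -/
import Mathlib

section
/- Let γ > 0 and g > 0 satisfy 2γg > 1. Then the function h_{γ,g} : ℝ² → ℝ² defined by h_{γ,g}(z) = g z/|z| if γ|z| ≥ g + 1/(2γ); h_{γ,g}(z) = (z/|z|)(g − (γ/2)(g − γ|z| + 1/(2γ))²) if g − 1/(2γ) ≤ γ|z| ≤ g + 1/(2γ); and h_{γ,g}(z) = γ z if γ|z| ≤ g − 1/(2γ), is continuously differentiable on all of ℝ², and satisfies |h_{γ,g}(z)| ≤ g for every z ∈ ℝ². -/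
/-- The C¹ local regularization `h_{γ,g}` of the subdifferential of the Euclidean norm
(equation (3.6) of the paper). -/
noncomputable def hreg (γ g : ℝ) (z : EuclideanSpace ℝ (Fin 2)) : EuclideanSpace ℝ (Fin 2) :=
  if g + 1 / (2 * γ) ≤ γ * ‖z‖ then (g / ‖z‖) • z
  else if g - 1 / (2 * γ) ≤ γ * ‖z‖ then
    ((g - γ / 2 * (g - γ * ‖z‖ + 1 / (2 * γ)) ^ 2) / ‖z‖) • z
  else γ • z

/-- The auxiliary function `t ↦ t ⊔ 0 * t`, i.e. `max t 0 ^ 2` -- a C¹ function. -/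
noncomputable def Qaux (t : ℝ) : ℝ := t * max t 0

lemma Qaux_hasDerivAt (t : ℝ) : HasDerivAt Qaux (2 * max t 0) t := by
  rcases lt_trichotomy t 0 with h | h | h
  · have heq : Qaux =ᶠ[nhds t] fun _ => (0 : ℝ) := by
      filter_upwards [Iio_mem_nhds h] with x hx
      simp [Qaux, max_eq_right (Set.mem_Iio.1 hx).le]
    have h0 : HasDerivAt (fun _ : ℝ => (0 : ℝ)) 0 t := hasDerivAt_const _ _
    have := h0.congr_of_eventuallyEq heq
    simpa [max_eq_right h.le] using this
  · subst h
    rw [hasDerivAt_iff_tendsto_slope]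
    have heq : ∀ x ∈ ({(0:ℝ)}ᶜ : Set ℝ), max x 0 = slope Qaux 0 x := by
      intro x hx
      have hx' : x ≠ 0 := hx
      simp [slope, Qaux, hx', mul_comm, mul_div_assoc, div_self hx']
    have hcont : Filter.Tendsto (fun x : ℝ => max x 0) (nhdsWithin 0 {(0:ℝ)}ᶜ)
        (nhds (2 * max 0 0)) := by
      have : Filter.Tendsto (fun x : ℝ => max x 0) (nhds 0) (nhds (max 0 0)) :=
        (continuous_id.max continuous_const).tendsto 0
      simpa using this.mono_left nhdsWithin_le_nhds
    exact hcont.congr' (Filter.eventually_iff_exists_mem.2 ⟨{(0:ℝ)}ᶜ, self_mem_nhdsWithin, heq⟩)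
  · have heq : Qaux =ᶠ[nhds t] fun x => x * x := by
      filter_upwards [Ioi_mem_nhds h] with x hx
      simp [Qaux, max_eq_left (Set.mem_Ioi.1 hx).le]
    have h0 : HasDerivAt (fun x : ℝ => x * x) (2 * t) t := by
      have := (hasDerivAt_id' t).mul (hasDerivAt_id' t); simp only [one_mul, mul_one] at this; rwa [two_mul]
    have := h0.congr_of_eventuallyEq heq
    simpa [max_eq_left h.le] using this

lemma Qaux_contDiff : ContDiff ℝ 1 Qaux := by
  rw [contDiff_one_iff_deriv]
  refine ⟨fun t => (Qaux_hasDerivAt t).differentiableAt, ?_⟩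
  have : deriv Qaux = fun t => 2 * max t 0 := funext fun t => (Qaux_hasDerivAt t).deriv
  rw [this]
  exact continuous_const.mul (continuous_id.max continuous_const)

/-- For γ > 0, g > 0 with 2γg > 1, the map `h_{γ,g}` is continuously differentiable on
all of ℝ² and satisfies `|h_{γ,g}(z)| ≤ g` for every z ∈ ℝ². -/
theorem hreg_contDiff_and_bounded (γ g : ℝ) (hγ : 0 < γ) (hg : 0 < g)
    (hγg : 1 < 2 * γ * g) :
    ContDiff ℝ 1 (hreg γ g) ∧ ∀ z : EuclideanSpace ℝ (Fin 2), ‖hreg γ g z‖ ≤ g := by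
  have hγ' : γ ≠ 0 := ne_of_gt hγ
  have hhalf : 0 < 1 / (2 * γ) := by positivity
  have hlow : 0 < g - 1 / (2 * γ) := by
    rw [sub_pos, div_lt_iff₀ (by positivity)]
    linarith
  -- the closed-form scalar profile
  set F : ℝ → ℝ := fun r =>
    g - γ / 2 * Qaux (g + 1 / (2 * γ) - γ * r) + γ / 2 * Qaux (g - 1 / (2 * γ) - γ * r)
    with hFdef
  have hFval : ∀ r : ℝ,
      F r = if g + 1 / (2 * γ) ≤ γ * r then g
        else if g - 1 / (2 * γ) ≤ γ * r then
          g - γ / 2 * (g - γ * r + 1 / (2 * γ)) ^ 2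
        else γ * r := by
    intro r
    split_ifs with h1 h2
    · have ht1 : g + 1 / (2 * γ) - γ * r ≤ 0 := by linarith
      have ht2 : g - 1 / (2 * γ) - γ * r ≤ 0 := by linarith
      simp only [hFdef, Qaux, max_eq_right ht1, max_eq_right ht2]
      ring
    · have ht1 : 0 ≤ g + 1 / (2 * γ) - γ * r := by linarith
      have ht2 : g - 1 / (2 * γ) - γ * r ≤ 0 := by linarith
      simp only [hFdef, Qaux, max_eq_left ht1, max_eq_right ht2]
      ring
    · have ht1 : 0 ≤ g + 1 / (2 * γ) - γ * r := by linarith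
      have ht2 : 0 ≤ g - 1 / (2 * γ) - γ * r := by linarith
      simp only [hFdef, Qaux, max_eq_left ht1, max_eq_left ht2]
      field_simp
      ring
  have hF : ContDiff ℝ 1 F := by
    have haff1 : ContDiff ℝ 1 fun r : ℝ => g + 1 / (2 * γ) - γ * r :=
      contDiff_const.sub (contDiff_const.mul contDiff_id)
    have haff2 : ContDiff ℝ 1 fun r : ℝ => g - 1 / (2 * γ) - γ * r :=
      contDiff_const.sub (contDiff_const.mul contDiff_id)
    exact (contDiff_const.sub (contDiff_const.mul (Qaux_contDiff.comp haff1))).add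
      (contDiff_const.mul (Qaux_contDiff.comp haff2))
  -- hreg agrees with the closed form away from 0
  have hreg_eq : ∀ w : EuclideanSpace ℝ (Fin 2), w ≠ 0 →
      hreg γ g w = (F ‖w‖ / ‖w‖) • w := by
    intro w hw
    have hnw : ‖w‖ ≠ 0 := norm_ne_zero_iff.2 hw
    rw [hFval ‖w‖]
    unfold hreg
    split_ifs with h1 h2
    · rfl
    · rfl
    · rw [mul_div_assoc, div_self hnw, mul_one]
  constructor
  · rw [contDiff_iff_contDiffAt]
    intro z
    by_cases hz : z = 0
    · subst hz
      have hopen : IsOpen {w : EuclideanSpace ℝ (Fin 2) | γ * ‖w‖ < g - 1 / (2 * γ)} :=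
        isOpen_lt (continuous_const.mul continuous_norm) continuous_const
      have hmem : {w : EuclideanSpace ℝ (Fin 2) | γ * ‖w‖ < g - 1 / (2 * γ)} ∈
          nhds (0 : EuclideanSpace ℝ (Fin 2)) := by
        apply hopen.mem_nhds
        simpa using hlow
      have heq : hreg γ g =ᶠ[nhds (0 : EuclideanSpace ℝ (Fin 2))] fun w => γ • w := by
        filter_upwards [hmem] with w hw
        have hw' : γ * ‖w‖ < g - 1 / (2 * γ) := hw
        unfold hreg
        rw [if_neg (by linarith), if_neg (by linarith)]
      exact ((contDiff_id.const_smul γ).contDiffAt).congr_of_eventuallyEq heq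
    · have hnz : ‖z‖ ≠ 0 := norm_ne_zero_iff.2 hz
      have hnorm : ContDiffAt ℝ 1 (fun w : EuclideanSpace ℝ (Fin 2) => ‖w‖) z :=
        contDiffAt_norm ℝ hz
      have hmain : ContDiffAt ℝ 1
          (fun w : EuclideanSpace ℝ (Fin 2) => (F ‖w‖ / ‖w‖) • w) z :=
        (((hF.contDiffAt.comp z hnorm).div hnorm hnz).smul contDiffAt_id)
      apply hmain.congr_of_eventuallyEq
      filter_upwards [isOpen_compl_singleton.mem_nhds hz] with w hw
      exact hreg_eq w hw
  · intro z
    unfold hreg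
    split_ifs with h1 h2
    · have hz : z ≠ 0 := by
        intro h
        rw [h, norm_zero, mul_zero] at h1
        linarith
      have hnz : (0:ℝ) < ‖z‖ := norm_pos_iff.2 hz
      rw [norm_smul, Real.norm_eq_abs, abs_of_nonneg (by positivity),
        div_mul_cancel₀ _ hnz.ne']
    · have hz : z ≠ 0 := by
        intro h
        rw [h, norm_zero, mul_zero] at h2
        linarith
      have hnz : (0:ℝ) < ‖z‖ := norm_pos_iff.2 hz
      set u := g - γ * ‖z‖ + 1 / (2 * γ) with hu
      have hu0 : 0 ≤ u := by
        have := not_le.1 h1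
        rw [hu]; linarith
      have hu1 : u ≤ 1 / γ := by
        have h1γ : 1 / (2 * γ) + 1 / (2 * γ) = 1 / γ := by
          rw [← add_div, div_mul_eq_div_div]; norm_num
        rw [hu]; linarith
      have hcge : 0 ≤ g - γ / 2 * u ^ 2 := by
        have h2' : γ / 2 * u ^ 2 ≤ γ / 2 * (1 / γ) ^ 2 := by
          have hx : 0 ≤ (1 / γ - u) * (1 / γ + u) :=
            mul_nonneg (by linarith) (by positivity)
          nlinarith
        have h3' : γ / 2 * (1 / γ) ^ 2 = 1 / (2 * γ) := by field_simp
        linarith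
      have hcle : g - γ / 2 * u ^ 2 ≤ g := by nlinarith
      rw [norm_smul, Real.norm_eq_abs, abs_of_nonneg (by positivity),
        div_mul_cancel₀ _ hnz.ne']
      exact hcle
    · rw [norm_smul, Real.norm_eq_abs, abs_of_nonneg hγ.le]
      have := not_le.1 h2
      linarith
end

section
/- Let γ > 0 and g > 0 satisfy 2γg > 1, and let h_{γ,g} : ℝ² → ℝ² be the C¹ regularizer defined by h_{γ,g}(z) = g z/|z| if γ|z| ≥ g + 1/(2γ); h_{γ,g}(z) = (z/|z|)(g − (γ/2)(g − γ|z| + 1/(2γ))²) if g − 1/(2γ) ≤ γ|z| ≤ g + 1/(2γ); and h_{γ,g}(z) = γ z if γ|z| ≤ g − 1/(2γ). Then h_{γ,g} is a monotone map: for all x, y ∈ ℝ², ⟨h_{γ,g}(x) − h_{γ,g}(y), x − y⟩ ≥ 0. -/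
/-- The scalar radial profile of `hreg`. -/
noncomputable def rho (γ g r : ℝ) : ℝ :=
  if g + 1 / (2 * γ) ≤ γ * r then g
  else if g - 1 / (2 * γ) ≤ γ * r then g - γ / 2 * (g - γ * r + 1 / (2 * γ)) ^ 2
  else γ * r

lemma hreg_eq_rho (γ g : ℝ) (z : EuclideanSpace ℝ (Fin 2)) :
    hreg γ g z = (rho γ g ‖z‖ / ‖z‖) • z := by
  rcases eq_or_ne z 0 with rfl | hz
  · unfold hreg rho; split_ifs <;> simp
  · have hz' : ‖z‖ ≠ 0 := norm_ne_zero_iff.mpr hz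
    unfold hreg rho; split_ifs with h1 h2
    · rfl
    · rfl
    · rw [mul_div_assoc, div_self hz', mul_one]

/-- On the middle regime the profile value lies above `g - 1/(2γ)`. -/
lemma mid_lower (γ g : ℝ) (hγ : 0 < γ) {u : ℝ} (h1 : ¬ g + 1 / (2 * γ) ≤ u)
    (h2 : g - 1 / (2 * γ) ≤ u) :
    g - 1 / (2 * γ) ≤ g - γ / 2 * (g - u + 1 / (2 * γ)) ^ 2 := by
  have hq1 : 0 ≤ g - u + 1 / (2 * γ) := by linarith
  have hq2 : g - u + 1 / (2 * γ) ≤ 2 * (1 / (2 * γ)) := by linarith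
  have h3 : (g - u + 1 / (2 * γ)) ^ 2 ≤ (2 * (1 / (2 * γ))) ^ 2 :=
    pow_le_pow_left₀ hq1 hq2 2
  have h4 : γ / 2 * (g - u + 1 / (2 * γ)) ^ 2 ≤ γ / 2 * (2 * (1 / (2 * γ))) ^ 2 :=
    mul_le_mul_of_nonneg_left h3 (by positivity)
  have h5 : γ / 2 * (2 * (1 / (2 * γ))) ^ 2 = 1 / (2 * γ) := by
    field_simp
  linarith

lemma rho_nonneg (γ g : ℝ) (hγ : 0 < γ) (hg : 0 < g) (hγg : 1 < 2 * γ * g)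
    {r : ℝ} (hr : 0 ≤ r) : 0 ≤ rho γ g r := by
  have hc0 : 0 < 1 / (2 * γ) := by positivity
  have hcg : 1 / (2 * γ) < g := by
    rw [div_lt_iff₀ (by positivity)]; linarith
  unfold rho; split_ifs with h1 h2
  · exact hg.le
  · have := mid_lower γ g hγ h1 h2
    linarith
  · positivity

lemma rho_mono (γ g : ℝ) (hγ : 0 < γ) (hg : 0 < g) (hγg : 1 < 2 * γ * g)
    {a b : ℝ} (ha : 0 ≤ a) (hab : a ≤ b) : rho γ g a ≤ rho γ g b := by
  have hγa : γ * a ≤ γ * b := mul_le_mul_of_nonneg_left hab hγ.le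
  have hc0 : 0 < 1 / (2 * γ) := by positivity
  have hcg : 1 / (2 * γ) < g := by
    rw [div_lt_iff₀ (by positivity)]; linarith
  unfold rho
  by_cases h1 : g + 1 / (2 * γ) ≤ γ * a
  · have h1b : g + 1 / (2 * γ) ≤ γ * b := le_trans h1 hγa
    rw [if_pos h1, if_pos h1b]
  · rw [if_neg h1]
    by_cases h2 : g - 1 / (2 * γ) ≤ γ * a
    · rw [if_pos h2]
      by_cases h1b : g + 1 / (2 * γ) ≤ γ * b
      · rw [if_pos h1b]
        nlinarith [sq_nonneg (g - γ * a + 1 / (2 * γ))]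
      · have h2b : g - 1 / (2 * γ) ≤ γ * b := le_trans h2 hγa
        rw [if_neg h1b, if_pos h2b]
        have hqb : 0 ≤ g - γ * b + 1 / (2 * γ) := by linarith
        have hqa : 0 ≤ g - γ * a + 1 / (2 * γ) := by linarith
        nlinarith [mul_nonneg (sub_nonneg.mpr hγa)
          (add_nonneg hqa hqb), hγ.le,
          mul_nonneg hγ.le (mul_nonneg (sub_nonneg.mpr hγa) (add_nonneg hqa hqb))]
    · rw [if_neg h2]
      by_cases h1b : g + 1 / (2 * γ) ≤ γ * b
      · rw [if_pos h1b]; linarith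
      · rw [if_neg h1b]
        by_cases h2b : g - 1 / (2 * γ) ≤ γ * b
        · rw [if_pos h2b]
          have := mid_lower γ g hγ h1b h2b
          linarith
        · rw [if_neg h2b]; exact hγa

lemma rho_zero (γ g : ℝ) (hγ : 0 < γ) (hg : 0 < g) (hγg : 1 < 2 * γ * g) :
    rho γ g 0 = 0 := by
  have hc0 : 0 < 1 / (2 * γ) := by positivity
  have hcg : 1 / (2 * γ) < g := by
    rw [div_lt_iff₀ (by positivity)]; linarith
  unfold rho
  rw [if_neg (by rw [mul_zero]; push_neg; linarith),
    if_neg (by rw [mul_zero]; push_neg; linarith), mul_zero]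

lemma rho_div_mul (γ g : ℝ) (hγ : 0 < γ) (hg : 0 < g) (hγg : 1 < 2 * γ * g)
    (r : ℝ) : rho γ g r / r * r = rho γ g r := by
  rcases eq_or_ne r 0 with rfl | hr
  · rw [rho_zero γ g hγ hg hγg]; simp
  · exact div_mul_cancel₀ _ hr

/-- For γ > 0, g > 0 with 2γg > 1, the map `h_{γ,g}` is monotone:
`⟨h_{γ,g}(x) − h_{γ,g}(y), x − y⟩ ≥ 0` for all x, y ∈ ℝ². -/
theorem hreg_monotone (γ g : ℝ) (hγ : 0 < γ) (hg : 0 < g) (hγg : 1 < 2 * γ * g)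
    (x y : EuclideanSpace ℝ (Fin 2)) :
    0 ≤ (inner ℝ (hreg γ g x - hreg γ g y) (x - y) : ℝ) := by
  rw [hreg_eq_rho, hreg_eq_rho]
  have key : (inner ℝ ((rho γ g ‖x‖ / ‖x‖) • x - (rho γ g ‖y‖ / ‖y‖) • y) (x - y) : ℝ)
      = (rho γ g ‖x‖ / ‖x‖) * (‖x‖ ^ 2 - (inner ℝ x y : ℝ))
        + (rho γ g ‖y‖ / ‖y‖) * (‖y‖ ^ 2 - (inner ℝ x y : ℝ)) := by
    simp only [inner_sub_left, inner_sub_right, real_inner_smul_left,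
      real_inner_self_eq_norm_sq]
    rw [real_inner_comm y x]
    ring
  rw [key]
  set a := ‖x‖
  set b := ‖y‖
  set s : ℝ := inner ℝ x y
  have ha : 0 ≤ a := norm_nonneg x
  have hb : 0 ≤ b := norm_nonneg y
  have hs : s ≤ a * b := real_inner_le_norm x y
  have hρa : 0 ≤ rho γ g a := rho_nonneg γ g hγ hg hγg ha
  have hρb : 0 ≤ rho γ g b := rho_nonneg γ g hγ hg hγg hb
  have hda : 0 ≤ rho γ g a / a := div_nonneg hρa ha
  have hdb : 0 ≤ rho γ g b / b := div_nonneg hρb hb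
  have hma : rho γ g a / a * a = rho γ g a := rho_div_mul γ g hγ hg hγg a
  have hmb : rho γ g b / b * b = rho γ g b := rho_div_mul γ g hγ hg hγg b
  have hmono : 0 ≤ (rho γ g a - rho γ g b) * (a - b) := by
    rcases le_total a b with h | h
    · have := rho_mono γ g hγ hg hγg ha h
      nlinarith
    · have := rho_mono γ g hγ hg hγg hb h
      nlinarith
  have h1 : (rho γ g a / a) * s ≤ (rho γ g a / a) * (a * b) :=
    mul_le_mul_of_nonneg_left hs hda
  have h2 : (rho γ g b / b) * s ≤ (rho γ g b / b) * (a * b) :=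
    mul_le_mul_of_nonneg_left hs hdb
  have expand : (rho γ g a / a) * (a ^ 2 - a * b) + (rho γ g b / b) * (b ^ 2 - a * b)
      = (rho γ g a - rho γ g b) * (a - b) := by
    have e1 : (rho γ g a / a) * (a ^ 2 - a * b) = rho γ g a * (a - b) := by
      have h : (rho γ g a / a) * (a ^ 2 - a * b) = (rho γ g a / a * a) * (a - b) := by ring
      rw [h, hma]
    have e2 : (rho γ g b / b) * (b ^ 2 - a * b) = rho γ g b * (b - a) := by
      have h : (rho γ g b / b) * (b ^ 2 - a * b) = (rho γ g b / b * b) * (b - a) := by ring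
      rw [h, hmb]
    rw [e1, e2]; ring
  have e1' : (rho γ g a / a) * (a ^ 2 - s)
      = (rho γ g a / a) * (a ^ 2 - a * b) + ((rho γ g a / a) * (a * b) - (rho γ g a / a) * s) := by
    ring
  have e2' : (rho γ g b / b) * (b ^ 2 - s)
      = (rho γ g b / b) * (b ^ 2 - a * b) + ((rho γ g b / b) * (a * b) - (rho γ g b / b) * s) := by
    ring
  linarith [hmono, h1, h2, expand, e1', e2']
end
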